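/- Given a game m on N and a non-empty D ⊆ N, there exists a core element x ∈ C(m) with Σ_{i∈D} x_i = m(D) if and only if Σ_{∅≠S⊆N} θ(S)·m(S) ≥ 0 for every θ ∈ Θ^N_D. -/

import Mathlib

open Finset

section Dot
variable {α : Type*} [Fintype α]

/-- Dot product on `α → ℝ`. -/
def dotp (u w : α → ℝ) : ℝ := ∑ i, u i * w i

lemma dotp_comm (u w : α → ℝ) : dotp u w = dotp w u := by
  simp [dotp, mul_comm]

lemma dotp_smul_left (a : ℝ) (u w : α → ℝ) : dotp (a • u) w = a * dotp u w := by
  simp [dotp, Finset.mul_sum, mul_assoc]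

lemma dotp_sub_left (u v w : α → ℝ) : dotp (u - v) w = dotp u w - dotp v w := by
  simp [dotp, sub_mul, Finset.sum_sub_distrib]

lemma dotp_add_left (u v w : α → ℝ) : dotp (u + v) w = dotp u w + dotp v w := by
  simp [dotp, add_mul, Finset.sum_add_distrib]

lemma dotp_smul_right (a : ℝ) (u w : α → ℝ) : dotp u (a • w) = a * dotp u w := by
  rw [dotp_comm, dotp_smul_left, dotp_comm]

lemma dotp_sub_right (u v w : α → ℝ) : dotp u (v - w) = dotp u v - dotp u w := by
  rw [dotp_comm, dotp_sub_left, dotp_comm u v, dotp_comm u w]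

lemma dotp_sum_left {κ : Type*} (s : Finset κ) (f : κ → α → ℝ) (w : α → ℝ) :
    dotp (∑ i ∈ s, f i) w = ∑ i ∈ s, dotp (f i) w := by
  classical
  induction s using Finset.induction with
  | empty => simp [dotp]
  | insert _ _ h ih => rw [Finset.sum_insert h, dotp_add_left, ih, Finset.sum_insert h]

lemma dotp_self_nonneg (u : α → ℝ) : 0 ≤ dotp u u :=
  Finset.sum_nonneg fun i _ => mul_self_nonneg _

lemma dotp_self_pos {u : α → ℝ} (hu : u ≠ 0) : 0 < dotp u u := by
  rcases (dotp_self_nonneg u).lt_or_eq with h | h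
  · exact h
  · exfalso
    apply hu
    funext i
    have := (Finset.sum_eq_zero_iff_of_nonneg (fun i _ => mul_self_nonneg (u i))).1 h.symm
      i (Finset.mem_univ i)
    have : u i * u i = 0 := this
    simpa [mul_self_eq_zero] using this

/-- Farkas' lemma over `Fin n`. -/
theorem farkas_fin : ∀ (n : ℕ) (v : Fin n → (α → ℝ)) (b : α → ℝ),
    (∃ c : Fin n → ℝ, (∀ i, 0 ≤ c i) ∧ b = ∑ i, c i • v i) ∨
    (∃ y : α → ℝ, (∀ i, 0 ≤ dotp (v i) y) ∧ dotp b y < 0) := by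
  intro n
  induction n with
  | zero =>
    intro v b
    by_cases hb : b = 0
    · exact Or.inl ⟨fun i => 0, fun i => le_refl _, by simp [hb]⟩
    · refine Or.inr ⟨-b, fun i => i.elim0, ?_⟩
      have : dotp b (-b) = -dotp b b := by
        have := dotp_smul_right (-1 : ℝ) b b
        simpa using this
      rw [this]
      simpa using dotp_self_pos hb
  | succ n ih =>
    intro v b
    rcases ih (Fin.tail v) b with ⟨c, hc, hb⟩ | ⟨y, hy, hby⟩
    · -- already in the smaller cone
      refine Or.inl ⟨Fin.cons 0 c, ?_, ?_⟩
      · intro i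
        induction i using Fin.cases with
        | zero => simp
        | succ j => simpa using hc j
      · rw [Fin.sum_univ_succ]
        simpa [Fin.tail] using hb
    · by_cases h0 : 0 ≤ dotp (v 0) y
      · refine Or.inr ⟨y, ?_, hby⟩
        intro i
        induction i using Fin.cases with
        | zero => exact h0
        | succ j => exact hy j
      · push_neg at h0
        set d := dotp (v 0) y with hd
        -- projection along v 0
        set P : (α → ℝ) → (α → ℝ) := fun u => u - (dotp u y / d) • v 0 with hP
        have hPdot : ∀ u w : α → ℝ, dotp (P u) w = dotp u w - dotp u y / d * dotp (v 0) w := by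
          intro u w
          rw [hP]
          simp only []
          rw [dotp_sub_left, dotp_smul_left]
        rcases ih (fun i => P (Fin.tail v i)) (P b) with ⟨c, hc, hPb⟩ | ⟨w, hw, hbw⟩
        · -- reconstruct membership in the bigger cone
          set u : α → ℝ := b - ∑ i, c i • Fin.tail v i with hu
          have hPu : P u = 0 := by
            rw [hP]
            simp only []
            rw [hu]
            have hsub : dotp (b - ∑ i, c i • Fin.tail v i) y
                = dotp b y - ∑ i, c i * dotp (Fin.tail v i) y := by
              rw [dotp_sub_left, dotp_sum_left]
              congr 1
              exact Finset.sum_congr rfl fun i _ => dotp_smul_left _ _ _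
            -- P b = sum of c i • P (tail v i)
            have hexp : P b = b - (dotp b y / d) • v 0 := rfl
            have hsum : ∑ i, c i • P (Fin.tail v i)
                = (∑ i, c i • Fin.tail v i) - ((∑ i, c i * dotp (Fin.tail v i) y) / d) • v 0 := by
              rw [hP]
              simp only [smul_sub, smul_smul]
              rw [Finset.sum_sub_distrib, ← Finset.sum_smul]
              congr 2
              rw [Finset.sum_div]
              exact Finset.sum_congr rfl fun i _ => by ring
            have := hPb
            rw [hexp, hsum] at this
            -- b - (dotp b y / d) • v 0 = (∑ ...) - (.../d) • v 0
            have : b - ∑ i, c i • Fin.tail v i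
                = ((dotp b y - ∑ i, c i * dotp (Fin.tail v i) y) / d) • v 0 := by
              have h2 := sub_eq_sub_iff_sub_eq_sub.mp this
              rw [sub_div, sub_smul]
              exact h2
            rw [hsub, this]
            exact sub_self _
          have hkey : u = (dotp u y / d) • v 0 := by
            have := hPu
            rw [hP] at this
            simp only [] at this
            have := sub_eq_zero.mp this
            exact this
          have hupos : dotp u y < 0 := by
            rw [hu, dotp_sub_left, dotp_sum_left]
            have : ∑ i, dotp (c i • Fin.tail v i) y = ∑ i, c i * dotp (Fin.tail v i) y :=
              Finset.sum_congr rfl fun i _ => dotp_smul_left _ _ _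
            rw [this]
            have hnn : 0 ≤ ∑ i, c i * dotp (Fin.tail v i) y :=
              Finset.sum_nonneg fun i _ => mul_nonneg (hc i) (hy i)
            linarith
          have hβ : 0 < dotp u y / d := div_pos_iff.mpr (Or.inr ⟨hupos, h0⟩)
          refine Or.inl ⟨Fin.cons (dotp u y / d) c, ?_, ?_⟩
          · intro i
            induction i using Fin.cases with
            | zero => simpa using hβ.le
            | succ j => simpa using hc j
          · rw [Fin.sum_univ_succ]
            simp only [Fin.cons_zero, Fin.cons_succ]
            have : b = (dotp u y / d) • v 0 + ∑ i, c i • Fin.tail v i := by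
              rw [← hkey, hu]; abel
            simpa [Fin.tail] using this
        · -- build new separating vector
          refine Or.inr ⟨w - (dotp (v 0) w / d) • y, ?_, ?_⟩
          · intro i
            induction i using Fin.cases with
            | zero =>
              have hne : d ≠ 0 := ne_of_lt h0
              rw [dotp_sub_right, dotp_smul_right, ← hd, div_mul_cancel₀ _ hne, sub_self]
            | succ j =>
              have := hw j
              rw [hPdot] at this
              rw [dotp_sub_right, dotp_smul_right]
              have hcomm : dotp (Fin.tail v j) y / d * dotp (v 0) w
                  = dotp (v 0) w / d * dotp (Fin.tail v j) y := by ring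
              rw [hcomm] at this
              exact this
          · have := hbw
            rw [hPdot] at this
            rw [dotp_sub_right, dotp_smul_right]
            have hcomm : dotp b y / d * dotp (v 0) w = dotp (v 0) w / d * dotp b y := by ring
            rw [hcomm] at this
            exact this

/-- Farkas' lemma over an arbitrary finite index type. -/
theorem farkas {κ : Type*} [Fintype κ] (v : κ → (α → ℝ)) (b : α → ℝ) :
    (∃ c : κ → ℝ, (∀ i, 0 ≤ c i) ∧ b = ∑ i, c i • v i) ∨
    (∃ y : α → ℝ, (∀ i, 0 ≤ dotp (v i) y) ∧ dotp b y < 0) := by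
  classical
  obtain ⟨e⟩ : Nonempty (κ ≃ Fin (Fintype.card κ)) := ⟨Fintype.equivFin κ⟩
  rcases farkas_fin (Fintype.card κ) (fun i => v (e.symm i)) b with ⟨c, hc, hb⟩ | h
  · refine Or.inl ⟨fun i => c (e i), fun i => hc _, ?_⟩
    rw [hb]
    rw [← e.symm.sum_comp (fun i => c (e i) • v i)]
    simp
  · rcases h with ⟨y, hy, hby⟩
    exact Or.inr ⟨y, fun i => by simpa using hy (e i), hby⟩

end Dot

variable {ι : Type*} [DecidableEq ι] [Fintype ι]

/-- Append a scalar coordinate to a vector. -/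
def vecO (a : ι → ℝ) (r : ℝ) : Option ι → ℝ := fun o => o.elim r a

lemma dotp_vecO (a : ι → ℝ) (r : ℝ) (y : Option ι → ℝ) :
    dotp (vecO a r) y = r * y none + ∑ i, a i * y (some i) := by
  simp [dotp, vecO, Fintype.sum_option]

lemma sum_ind_mul (S : Finset ι) (f : ι → ℝ) :
    ∑ i, (if i ∈ S then (1:ℝ) else 0) * f i = ∑ i ∈ S, f i := by
  simp only [ite_mul, one_mul, zero_mul]
  rw [Finset.sum_ite_mem, Finset.univ_inter]

/-- The core of a game `m` on the player set `ι`. -/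
def core (m : Finset ι → ℝ) : Set (ι → ℝ) :=
  {x | ∑ i, x i = m Finset.univ ∧ ∀ S : Finset ι, m S ≤ ∑ i ∈ S, x i}

/-- Membership in the cone `Θ^N_D`: o-standardized set functions that are
non-positive outside `{∅, D, N}`. -/
def InTheta (D : Finset ι) (θ : Finset ι → ℝ) : Prop :=
  (∀ S : Finset ι, S ≠ ∅ → S ≠ D → S ≠ Finset.univ → θ S ≤ 0) ∧
  (∑ S : Finset ι, θ S = 0) ∧
  (∀ i : ι, ∑ S ∈ Finset.univ.filter (fun S : Finset ι => i ∈ S), θ S = 0)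

theorem stmt17 (hcard : 2 ≤ Fintype.card ι) (m : Finset ι → ℝ) (h0 : m ∅ = 0)
    (D : Finset ι) (hD : D.Nonempty) :
    (∃ x ∈ core m, ∑ i ∈ D, x i = m D) ↔
      ∀ θ : Finset ι → ℝ, InTheta D θ →
        0 ≤ ∑ S ∈ Finset.univ.filter (fun S : Finset ι => S ≠ ∅), θ S * m S := by
  have hιne : Nonempty ι := Fintype.card_pos_iff.mp (by omega)
  have huniv_ne : (Finset.univ : Finset ι) ≠ ∅ := by
    simp [Finset.univ_eq_empty_iff, not_isEmpty_of_nonempty]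
  constructor
  · -- easy direction
    rintro ⟨x, ⟨hxN, hxS⟩, hxD⟩ θ ⟨ht1, ht2, ht3⟩
    have hfull : ∑ S ∈ Finset.univ.filter (fun S : Finset ι => S ≠ ∅), θ S * m S
        = ∑ S : Finset ι, θ S * m S := by
      rw [← Finset.sum_filter_add_sum_filter_not Finset.univ (fun S : Finset ι => S ≠ ∅)
        (fun S => θ S * m S)]
      have : Finset.univ.filter (fun S : Finset ι => ¬ S ≠ ∅) = {∅} := by
        ext S; simp
      rw [this]
      simp [h0]
    rw [hfull]
    have claim1 : ∑ S : Finset ι, θ S * (∑ i ∈ S, x i) = 0 := by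
      calc ∑ S : Finset ι, θ S * (∑ i ∈ S, x i)
          = ∑ S : Finset ι, ∑ i, (if i ∈ S then θ S * x i else 0) := by
            refine Finset.sum_congr rfl fun S _ => ?_
            rw [Finset.mul_sum]
            exact ((Finset.sum_ite_mem Finset.univ S (fun i => θ S * x i)).trans
              (by rw [Finset.univ_inter])).symm
        _ = ∑ i, ∑ S : Finset ι, (if i ∈ S then θ S * x i else 0) := Finset.sum_comm
        _ = ∑ i, (∑ S ∈ Finset.univ.filter (fun S : Finset ι => i ∈ S), θ S) * x i := by
            refine Finset.sum_congr rfl fun i _ => ?_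
            rw [Finset.sum_mul, Finset.sum_filter]
        _ = 0 := by simp [ht3]
    have claim2 : ∀ S : Finset ι, θ S * (∑ i ∈ S, x i) ≤ θ S * m S := by
      intro S
      by_cases hSe : S = ∅
      · simp [hSe, h0]
      by_cases hSD : S = D
      · rw [hSD, hxD]
      by_cases hSN : S = Finset.univ
      · rw [hSN, hxN]
      · exact mul_le_mul_of_nonpos_left (hxS S) (ht1 S hSe hSD hSN)
    calc (0:ℝ) = ∑ S : Finset ι, θ S * (∑ i ∈ S, x i) := claim1.symm
      _ ≤ ∑ S : Finset ι, θ S * m S := Finset.sum_le_sum fun S _ => claim2 S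
  · -- hard direction
    intro H
    classical
    set v : (Finset ι ⊕ Fin 3) → Option ι → ℝ := Sum.elim
      (fun S => vecO (fun i => if i ∈ S then (-1:ℝ) else 0) (-(m S)))
      ![vecO (fun _ => 1) (m Finset.univ),
        vecO (fun i => if i ∈ D then (1:ℝ) else 0) (m D),
        vecO 0 1] with hv
    set b : Option ι → ℝ := vecO 0 (-1) with hb
    rcases farkas v b with ⟨c, hc, hbc⟩ | ⟨y, hy, hby⟩
    · -- cone membership contradicts H
      exfalso
      -- coordinate equations
      have hcoord : ∀ o : Option ι, b o = ∑ r, c r * v r o := by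
        intro o
        rw [hbc]
        simp [Finset.sum_apply]
      have hsome : ∀ i : ι,
          ∑ S ∈ Finset.univ.filter (fun S : Finset ι => i ∈ S), c (Sum.inl S)
            = c (Sum.inr 0) + (if i ∈ D then c (Sum.inr 1) else 0) := by
        intro i
        have h := hcoord (some i)
        rw [Fintype.sum_sum_type, Fin.sum_univ_three] at h
        simp only [hv, hb, Sum.elim_inl, Sum.elim_inr, vecO, Option.elim,
          Matrix.cons_val_zero, Matrix.cons_val_one, Matrix.head_cons,
          Matrix.cons_val_two, Matrix.tail_cons, Pi.zero_apply] at h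
        have e1 : ∑ S : Finset ι, c (Sum.inl S) * (if i ∈ S then (-1:ℝ) else 0)
            = -∑ S ∈ Finset.univ.filter (fun S : Finset ι => i ∈ S), c (Sum.inl S) := by
          rw [← Finset.sum_neg_distrib, Finset.sum_filter]
          exact Finset.sum_congr rfl fun S _ => by split <;> ring
        rw [e1] at h
        by_cases hiD : i ∈ D <;> simp only [hiD, if_true, if_false] at h ⊢ <;> linarith
      have hnone : (-1:ℝ) = -(∑ S : Finset ι, c (Sum.inl S) * m S)
          + (c (Sum.inr 0) * m Finset.univ + c (Sum.inr 1) * m D + c (Sum.inr 2)) := by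
        have h := hcoord none
        rw [Fintype.sum_sum_type, Fin.sum_univ_three] at h
        simp only [hv, hb, Sum.elim_inl, Sum.elim_inr, vecO, Option.elim,
          Matrix.cons_val_zero, Matrix.cons_val_one, Matrix.head_cons,
          Matrix.cons_val_two, Matrix.tail_cons, Pi.zero_apply] at h
        have e1 : ∑ S : Finset ι, c (Sum.inl S) * (-(m S))
            = -∑ S : Finset ι, c (Sum.inl S) * (m S) := by
          rw [← Finset.sum_neg_distrib]
          exact Finset.sum_congr rfl fun S _ => by ring
        rw [e1] at h
        linarith
      -- build the dual certificate θ
      set g : Finset ι → ℝ := fun S =>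
        (if S = D then c (Sum.inr 1) else 0) + (if S = Finset.univ then c (Sum.inr 0) else 0)
          - c (Sum.inl S) with hg
      set θ : Finset ι → ℝ := fun S =>
        if S = ∅ then -(∑ T ∈ Finset.univ.filter (fun T : Finset ι => T ≠ ∅), g T) else g S
        with hθ
      have hDne : D ≠ ∅ := Finset.nonempty_iff_ne_empty.mp hD
      have hfilt : Finset.univ.filter (fun S : Finset ι => ¬ S ≠ ∅) = {∅} := by
        ext S; simp
      have hθg : ∀ S : Finset ι, S ≠ ∅ → θ S = g S := by
        intro S hS
        rw [hθ]; exact if_neg hS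
      have hIT : InTheta D θ := by
        refine ⟨?_, ?_, ?_⟩
        · intro S hS1 hS2 hS3
          rw [hθg S hS1, hg]
          simp only [if_neg hS2, if_neg hS3]
          have := hc (Sum.inl S)
          linarith
        · rw [← Finset.sum_filter_add_sum_filter_not Finset.univ (fun S : Finset ι => S ≠ ∅) θ]
          have h2 : ∑ S ∈ Finset.univ.filter (fun S : Finset ι => S ≠ ∅), θ S
              = ∑ S ∈ Finset.univ.filter (fun S : Finset ι => S ≠ ∅), g S :=
            Finset.sum_congr rfl fun S hS => hθg S (Finset.mem_filter.mp hS).2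
          rw [hfilt, h2, Finset.sum_singleton]
          rw [hθ]
          simp
        · intro i
          have h2 : ∑ S ∈ Finset.univ.filter (fun S : Finset ι => i ∈ S), θ S
              = ∑ S ∈ Finset.univ.filter (fun S : Finset ι => i ∈ S), g S :=
            Finset.sum_congr rfl fun S hS => by
              have hiS : i ∈ S := (Finset.mem_filter.mp hS).2
              exact hθg S (by rintro rfl; simp at hiS)
          rw [h2, hg]
          simp only []
          rw [Finset.sum_sub_distrib, Finset.sum_add_distrib]
          rw [Finset.sum_ite_eq' (Finset.univ.filter (fun S : Finset ι => i ∈ S)) D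
            (fun _ => c (Sum.inr 1))]
          rw [Finset.sum_ite_eq' (Finset.univ.filter (fun S : Finset ι => i ∈ S)) Finset.univ
            (fun _ => c (Sum.inr 0))]
          have huin : Finset.univ ∈ Finset.univ.filter (fun S : Finset ι => i ∈ S) := by simp
          have hDin : (D ∈ Finset.univ.filter (fun S : Finset ι => i ∈ S)) ↔ i ∈ D := by simp
          rw [if_pos huin]
          have h3 := hsome i
          by_cases hiD : i ∈ D
          · rw [if_pos (hDin.mpr hiD)]
            rw [if_pos hiD] at h3
            linarith
          · rw [if_neg (fun hx => hiD (hDin.mp hx))]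
            rw [if_neg hiD] at h3
            linarith
      have hge := H θ hIT
      have hsum1 : ∑ S ∈ Finset.univ.filter (fun S : Finset ι => S ≠ ∅), θ S * m S
          = c (Sum.inr 1) * m D + c (Sum.inr 0) * m Finset.univ
            - ∑ S : Finset ι, c (Sum.inl S) * m S := by
        have h2 : ∑ S ∈ Finset.univ.filter (fun S : Finset ι => S ≠ ∅), θ S * m S
            = ∑ S ∈ Finset.univ.filter (fun S : Finset ι => S ≠ ∅),
                ((if S = D then c (Sum.inr 1) * m S else 0)
                  + (if S = Finset.univ then c (Sum.inr 0) * m S else 0)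
                  - c (Sum.inl S) * m S) :=
          Finset.sum_congr rfl fun S hS => by
            rw [hθg S (Finset.mem_filter.mp hS).2, hg]
            simp only []
            split <;> split <;> ring
        rw [h2, Finset.sum_sub_distrib, Finset.sum_add_distrib]
        rw [Finset.sum_ite_eq' (Finset.univ.filter (fun S : Finset ι => S ≠ ∅)) D
          (fun S => c (Sum.inr 1) * m S)]
        rw [Finset.sum_ite_eq' (Finset.univ.filter (fun S : Finset ι => S ≠ ∅)) Finset.univ
          (fun S => c (Sum.inr 0) * m S)]
        rw [if_pos (by simp [hDne] : D ∈ Finset.univ.filter (fun S : Finset ι => S ≠ ∅))]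
        rw [if_pos (by simp [huniv_ne] :
          (Finset.univ : Finset ι) ∈ Finset.univ.filter (fun S : Finset ι => S ≠ ∅))]
        have h3 : ∑ S ∈ Finset.univ.filter (fun S : Finset ι => S ≠ ∅), c (Sum.inl S) * m S
            = ∑ S : Finset ι, c (Sum.inl S) * m S := by
          have h4 := Finset.sum_filter_add_sum_filter_not Finset.univ
            (fun S : Finset ι => S ≠ ∅) (fun S => c (Sum.inl S) * m S)
          rw [hfilt, Finset.sum_singleton, h0, mul_zero, add_zero] at h4
          exact h4
        rw [h3]
      rw [hsum1] at hge
      have hc2 := hc (Sum.inr 2)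
      linarith
    · -- separating vector gives a core element
      have ht : 0 < y none := by
        have h2 := hy (Sum.inr 2)
        have hb' : dotp b y = -(y none) := by
          rw [hb, dotp_vecO]; simp
        have h2' : dotp (v (Sum.inr 2)) y = y none := by
          simp only [hv, Sum.elim_inr, Matrix.cons_val_two, Matrix.tail_cons, Matrix.head_cons]
          rw [dotp_vecO]; simp
        rw [h2'] at h2
        rw [hb'] at hby
        linarith
      set t := y none with hty
      refine ⟨fun i => -(y (some i)) / t, ⟨?_, ?_⟩, ?_⟩
      · -- sum over univ equals m univ
        have hge := hy (Sum.inl Finset.univ)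
        have hle := hy (Sum.inr 0)
        have hge' : dotp (v (Sum.inl Finset.univ)) y
            = -(m Finset.univ) * t - ∑ i, y (some i) := by
          simp only [hv, Sum.elim_inl]
          rw [dotp_vecO]
          congr 1
          rw [← Finset.sum_neg_distrib]
          exact Finset.sum_congr rfl fun i _ => by simp
        have hle' : dotp (v (Sum.inr 0)) y = m Finset.univ * t + ∑ i, y (some i) := by
          simp only [hv, Sum.elim_inr, Matrix.cons_val_zero]
          rw [dotp_vecO]
          simp
          exact Or.inl hty.symm
        rw [hge'] at hge; rw [hle'] at hle
        have hsum : ∑ i, -(y (some i)) / t = (-(∑ i, y (some i))) / t := by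
          rw [← Finset.sum_neg_distrib, Finset.sum_div]
        rw [hsum]
        rw [div_eq_iff (ne_of_gt ht)]
        nlinarith
      · -- core inequalities
        intro S
        have hge := hy (Sum.inl S)
        have hge' : dotp (v (Sum.inl S)) y = -(m S) * t - ∑ i ∈ S, y (some i) := by
          simp only [hv, Sum.elim_inl]
          rw [dotp_vecO]
          congr 1
          rw [← Finset.sum_neg_distrib, ← sum_ind_mul S (fun i => -(y (some i)))]
          exact Finset.sum_congr rfl fun i _ => by split <;> ring
        rw [hge'] at hge
        have hsum : ∑ i ∈ S, -(y (some i)) / t = (-(∑ i ∈ S, y (some i))) / t := by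
          rw [← Finset.sum_neg_distrib, Finset.sum_div]
        rw [hsum, le_div_iff₀ ht]
        nlinarith
      · -- tightness at D
        have hge := hy (Sum.inl D)
        have hle := hy (Sum.inr 1)
        have hge' : dotp (v (Sum.inl D)) y = -(m D) * t - ∑ i ∈ D, y (some i) := by
          simp only [hv, Sum.elim_inl]
          rw [dotp_vecO]
          congr 1
          rw [← Finset.sum_neg_distrib, ← sum_ind_mul D (fun i => -(y (some i)))]
          exact Finset.sum_congr rfl fun i _ => by split <;> ring
        have hle' : dotp (v (Sum.inr 1)) y = m D * t + ∑ i ∈ D, y (some i) := by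
          simp only [hv, Sum.elim_inr, Matrix.cons_val_one, Matrix.head_cons, Matrix.cons_val_zero]
          rw [dotp_vecO]
          congr 1
          rw [← sum_ind_mul D (fun i => y (some i))]
        rw [hge'] at hge; rw [hle'] at hle
        have hsum : ∑ i ∈ D, -(y (some i)) / t = (-(∑ i ∈ D, y (some i))) / t := by
          rw [← Finset.sum_neg_distrib, Finset.sum_div]
        rw [hsum, div_eq_iff (ne_of_gt ht)]
        nlinarith
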